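/- For every integer m ≥ 1, the quantum integer identity ∑_{i=1}^{m} ([2i]/[i])·[m−i+1] = m·[m+1] holds in ℚ(v), where [k] = (v^k − v^{−k})/(v − v^{−1}). -/

import Mathlib

/-- The quantum integer `[k] = (v^k - v^{-k})/(v - v^{-1})` in `ℚ(v)`. -/
noncomputable def qint (k : ℕ) : RatFunc ℚ :=
  ((RatFunc.X : RatFunc ℚ) ^ k - (RatFunc.X : RatFunc ℚ)⁻¹ ^ k) /
    ((RatFunc.X : RatFunc ℚ) - (RatFunc.X : RatFunc ℚ)⁻¹)

/-- ℤ-indexed quantum integer. -/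
noncomputable def qzint (k : ℤ) : RatFunc ℚ :=
  ((RatFunc.X : RatFunc ℚ) ^ k - (RatFunc.X : RatFunc ℚ) ^ (-k)) /
    ((RatFunc.X : RatFunc ℚ) - (RatFunc.X : RatFunc ℚ)⁻¹)

lemma qX_pow_ne_one (n : ℕ) (hn : n ≠ 0) : (RatFunc.X : RatFunc ℚ) ^ n ≠ 1 := by
  intro h
  have : (algebraMap (Polynomial ℚ) (RatFunc ℚ)) (Polynomial.X ^ n)
      = (algebraMap (Polynomial ℚ) (RatFunc ℚ)) 1 := by
    simpa [map_pow, RatFunc.algebraMap_X] using h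
  have h2 := RatFunc.algebraMap_injective ℚ this
  have := congrArg Polynomial.natDegree h2
  simp [Polynomial.natDegree_X_pow] at this
  exact hn this

lemma qD_ne_zero : (RatFunc.X : RatFunc ℚ) - (RatFunc.X : RatFunc ℚ)⁻¹ ≠ 0 := by
  intro h
  have hX : (RatFunc.X : RatFunc ℚ) ≠ 0 := RatFunc.X_ne_zero
  have h1 : (RatFunc.X : RatFunc ℚ) = (RatFunc.X : RatFunc ℚ)⁻¹ := sub_eq_zero.mp h
  have h2 : (RatFunc.X : RatFunc ℚ) ^ 2 = 1 := by
    rw [sq]; nth_rewrite 2 [h1]; exact mul_inv_cancel₀ hX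
  exact qX_pow_ne_one 2 (by norm_num) h2

lemma qint_eq (k : ℕ) : qint k = qzint k := by
  unfold qint qzint
  rw [inv_pow, ← zpow_natCast (RatFunc.X : RatFunc ℚ) k, zpow_neg]

lemma qzint_neg (k : ℤ) : qzint (-k) = - qzint k := by
  unfold qzint
  rw [neg_neg, ← neg_div, neg_sub]

lemma qint_ne_zero (i : ℕ) (hi : 1 ≤ i) : qint i ≠ 0 := by
  unfold qint
  have hX : (RatFunc.X : RatFunc ℚ) ≠ 0 := RatFunc.X_ne_zero
  refine div_ne_zero ?_ qD_ne_zero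
  intro h
  have h1 : (RatFunc.X : RatFunc ℚ) ^ i = ((RatFunc.X : RatFunc ℚ) ^ i)⁻¹ := by
    rw [← inv_pow]; exact sub_eq_zero.mp h
  have h2 : (RatFunc.X : RatFunc ℚ) ^ (2 * i) = 1 := by
    rw [two_mul, pow_add]; nth_rewrite 2 [h1]
    field_simp
  exact qX_pow_ne_one (2 * i) (by omega) h2

lemma qint_two_mul (i : ℕ) :
    qint (2 * i) = ((RatFunc.X : RatFunc ℚ) ^ i + (RatFunc.X : RatFunc ℚ)⁻¹ ^ i) * qint i := by
  unfold qint
  rw [← mul_div_assoc]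
  congr 1
  rw [mul_comm 2 i, pow_mul, pow_mul]
  ring

lemma qratio (i : ℕ) (hi : 1 ≤ i) :
    qint (2 * i) / qint i = (RatFunc.X : RatFunc ℚ) ^ i + (RatFunc.X : RatFunc ℚ)⁻¹ ^ i := by
  rw [qint_two_mul, mul_div_assoc, div_self (qint_ne_zero i hi), mul_one]

lemma qkey (a b : ℤ) :
    ((RatFunc.X : RatFunc ℚ) ^ a + (RatFunc.X : RatFunc ℚ) ^ (-a)) * qzint b
      = qzint (b + a) + qzint (b - a) := by
  have hX : (RatFunc.X : RatFunc ℚ) ≠ 0 := RatFunc.X_ne_zero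
  unfold qzint
  rw [← add_div, ← mul_div_assoc]
  congr 1
  simp only [zpow_add₀ hX, zpow_sub₀ hX, neg_add, neg_sub, zpow_neg]
  ring

/-- For every `m ≥ 1`, `∑_{i=1}^m ([2i]/[i])·[m-i+1] = m·[m+1]` in `ℚ(v)`. -/
theorem quantum_integer_identity (m : ℕ) (hm : 1 ≤ m) :
    ∑ i ∈ Finset.Icc 1 m, (qint (2 * i) / qint i) * qint (m - i + 1)
      = (m : RatFunc ℚ) * qint (m + 1) := by
  have step : ∀ i ∈ Finset.Icc 1 m,
      (qint (2 * i) / qint i) * qint (m - i + 1)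
        = qzint (m + 1) + qzint ((m : ℤ) + 1 - 2 * i) := by
    intro i hi
    obtain ⟨h1, h2⟩ := Finset.mem_Icc.mp hi
    rw [qratio i h1, qint_eq,
      show (RatFunc.X : RatFunc ℚ) ^ i + (RatFunc.X : RatFunc ℚ)⁻¹ ^ i
        = (RatFunc.X : RatFunc ℚ) ^ (i : ℤ) + (RatFunc.X : RatFunc ℚ) ^ (-(i : ℤ)) by
          rw [inv_pow, ← zpow_natCast (RatFunc.X : RatFunc ℚ) i, zpow_neg],
      qkey]
    congr 1 <;> [skip; skip] <;> · congr 1; omega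
  rw [Finset.sum_congr rfl step, Finset.sum_add_distrib]
  have hzero : ∑ i ∈ Finset.Icc 1 m, qzint ((m : ℤ) + 1 - 2 * i) = 0 := by
    apply Finset.sum_involution (fun i _ => m + 1 - i)
    · intro i hi
      obtain ⟨h1, h2⟩ := Finset.mem_Icc.mp hi
      have : ((m : ℤ) + 1 - 2 * ↑(m + 1 - i)) = -((m : ℤ) + 1 - 2 * i) := by omega
      rw [this, qzint_neg]; ring
    · intro i hi hne heq
      obtain ⟨h1, h2⟩ := Finset.mem_Icc.mp hi
      apply hne
      have : ((m : ℤ) + 1 - 2 * i) = 0 := by omega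
      rw [this]
      simp [qzint]
    · intro i hi
      obtain ⟨h1, h2⟩ := Finset.mem_Icc.mp hi
      exact Finset.mem_Icc.mpr ⟨by omega, by omega⟩
    · intro i hi
      obtain ⟨h1, h2⟩ := Finset.mem_Icc.mp hi
      omega
  rw [hzero, add_zero, Finset.sum_const, Nat.card_Icc]
  rw [qint_eq, nsmul_eq_mul]
  push_cast
  ring_nf
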